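/- Let A be a separable C*-algebra and D a weakly Cartan subalgebra of A. Let n, m be normalisers of D in A and φ ∈ supp°(n*n) ∩ supp°(m*m), and suppose there is an open neighbourhood U of φ in D̂ with U ⊆ supp°(n*n) ∩ supp°(m*m) and α_n|_U = α_m|_U. Fix d ∈ D with supp°(d) ⊆ U and φ(d) = 1, and set w := φ(n*n)^{−1/2} φ(m*m)^{−1/2} d n* m d. Then w lies in the relative commutant D', π_φ(w) is a unitary element of the unital C*-algebra D'/J_φ, and π_φ(w) does not depend on the choices of U and d. -/

import Mathlib

open WeakDual Filter Topology

universe u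

/-- `D` contains an approximate unit for `A`: a net `(e_i)` in `D` with
`e_i a → a` and `a e_i → a` for all `a ∈ A`. -/
def HasApproxUnit {A : Type u} [NonUnitalCStarAlgebra A]
    (D : NonUnitalStarSubalgebra ℂ A) : Prop :=
  ∃ (ι : Type u) (l : Filter ι) (e : ι → A), l.NeBot ∧ (∀ i, e i ∈ D) ∧
    ∀ a : A, Tendsto (fun i => e i * a) l (𝓝 a) ∧ Tendsto (fun i => a * e i) l (𝓝 a)

/-- `n` is a normaliser of `D` in `A`: `nDn* ⊆ D` and `n*Dn ⊆ D`. -/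
def IsNormalizer {A : Type u} [NonUnitalCStarAlgebra A]
    (D : NonUnitalStarSubalgebra ℂ A) (n : A) : Prop :=
  ∀ d ∈ D, n * d * star n ∈ D ∧ star n * d * n ∈ D

/-- `supp°(d) = {φ ∈ D̂ : φ(d) ≠ 0}`, an open subset of the character space of `D`. -/
def suppo {A : Type u} [NonUnitalCStarAlgebra A] (D : NonUnitalStarSubalgebra ℂ A)
    (d : D) : Set ↥(characterSpace ℂ D) :=
  {φ | φ.1 d ≠ 0}

/-- `e` is the partial homeomorphism `α_n : supp°(n*n) → supp°(nn*)` of the character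
space of `D` determined by `φ(n*n)·(α_n φ)(d) = φ(n*dn)` for `φ ∈ supp°(n*n)`, `d ∈ D`. -/
def IsAlphaFor {A : Type u} [NonUnitalCStarAlgebra A] (D : NonUnitalStarSubalgebra ℂ A)
    (n : A) (e : PartialHomeomorph ↥(characterSpace ℂ D) ↥(characterSpace ℂ D)) : Prop :=
  ∀ (h1 : star n * n ∈ D) (h2 : n * star n ∈ D),
    e.source = suppo D ⟨star n * n, h1⟩ ∧ e.target = suppo D ⟨n * star n, h2⟩ ∧
    ∀ φ ∈ e.source, ∀ (d : D) (hd : star n * (d : A) * n ∈ D),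
      φ.1 ⟨star n * n, h1⟩ * (e φ).1 d = φ.1 ⟨star n * (d : A) * n, hd⟩

/-- The relative commutant `D' = {a ∈ A : ad = da for all d ∈ D}` of `D` in `A`. -/
def commutantSet {A : Type u} [NonUnitalCStarAlgebra A]
    (D : NonUnitalStarSubalgebra ℂ A) : Set A :=
  {a : A | ∀ d ∈ D, a * d = d * a}

/-- The ideal `J_φ = ker(φ)·D'` of `D'`: the closed linear span of products `d·a`
with `d ∈ D`, `φ(d) = 0` and `a ∈ D'`. -/
def Jphi {A : Type u} [NonUnitalCStarAlgebra A] (D : NonUnitalStarSubalgebra ℂ A)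
    (φ : ↥(characterSpace ℂ D)) : Set A :=
  closure ((Submodule.span ℂ
    {x : A | ∃ d : D, φ.1 d = 0 ∧ ∃ a ∈ commutantSet D, x = (d : A) * a} : Submodule ℂ A) : Set A)

/-- `e` represents the unit of the quotient `D'/J`. -/
def IsUnitMod {A : Type u} [NonUnitalCStarAlgebra A] (D : NonUnitalStarSubalgebra ℂ A)
    (e : A) (J : Set A) : Prop :=
  ∀ a ∈ commutantSet D, a * e - a ∈ J ∧ e * a - a ∈ J

/-- `D` is a weakly Cartan subalgebra of `A`: it is abelian, contains an approximate
unit for `A`, each quotient `D'/J_φ` is unital, and units can be represented locally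
uniformly by elements of `D`. -/
def IsWeaklyCartan {A : Type u} [NonUnitalCStarAlgebra A]
    (D : NonUnitalStarSubalgebra ℂ A) : Prop :=
  (∀ a ∈ D, ∀ b ∈ D, a * b = b * a) ∧
  HasApproxUnit D ∧
  (∀ φ : ↥(characterSpace ℂ D), ∃ e ∈ commutantSet D, IsUnitMod D e (Jphi D φ)) ∧
  (∀ φ : ↥(characterSpace ℂ D), ∃ d : D, ∃ U : Set ↥(characterSpace ℂ D),
    IsOpen U ∧ φ ∈ U ∧ ∀ ψ ∈ U, IsUnitMod D (d : A) (Jphi D ψ))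

section Helpers

variable {A : Type u} [NonUnitalCStarAlgebra A] {D : NonUnitalStarSubalgebra ℂ A}

noncomputable def JphiM (D : NonUnitalStarSubalgebra ℂ A) (φ : ↥(characterSpace ℂ D)) :
    Submodule ℂ A :=
  (Submodule.span ℂ {x : A | ∃ d : D, φ.1 d = 0 ∧ ∃ a ∈ commutantSet D,
    x = (d : A) * a}).topologicalClosure

lemma mem_Jphi_iff {φ : ↥(characterSpace ℂ D)} {x : A} : x ∈ Jphi D φ ↔ x ∈ JphiM D φ :=
  Iff.rfl

lemma Jphi_sub_mem {φ : ↥(characterSpace ℂ D)} {x y : A} (hx : x ∈ Jphi D φ)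
    (hy : y ∈ Jphi D φ) : x - y ∈ Jphi D φ :=
  sub_mem (mem_Jphi_iff.mp hx) (mem_Jphi_iff.mp hy)

lemma Jphi_add_mem {φ : ↥(characterSpace ℂ D)} {x y : A} (hx : x ∈ Jphi D φ)
    (hy : y ∈ Jphi D φ) : x + y ∈ Jphi D φ :=
  add_mem (mem_Jphi_iff.mp hx) (mem_Jphi_iff.mp hy)

lemma Jphi_smul_mem {φ : ↥(characterSpace ℂ D)} (c : ℂ) {x : A} (hx : x ∈ Jphi D φ) :
    c • x ∈ Jphi D φ :=
  Submodule.smul_mem _ c (mem_Jphi_iff.mp hx)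

lemma Jphi_neg_mem {φ : ↥(characterSpace ℂ D)} {x : A} (hx : x ∈ Jphi D φ) :
    -x ∈ Jphi D φ :=
  neg_mem (mem_Jphi_iff.mp hx)

lemma gen_mem_Jphi {φ : ↥(characterSpace ℂ D)} (dd : D) (hdd : φ.1 dd = 0) {a : A}
    (ha : a ∈ commutantSet D) : (dd : A) * a ∈ Jphi D φ :=
  subset_closure (Submodule.subset_span ⟨dd, hdd, a, ha, rfl⟩)

lemma Jphi_mul_left {φ : ↥(characterSpace ℂ D)} (b : D) {x : A} (hx : x ∈ Jphi D φ) :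
    (b : A) * x ∈ Jphi D φ := by
  set S := {x : A | ∃ d : D, φ.1 d = 0 ∧ ∃ a ∈ commutantSet D, x = (d : A) * a}
  have hL : Continuous (fun y : A => (b : A) * y) := continuous_const.mul continuous_id
  have himg : (fun y : A => (b : A) * y) '' ((Submodule.span ℂ S : Submodule ℂ A) : Set A) ⊆
      ((Submodule.span ℂ S : Submodule ℂ A) : Set A) := by
    rintro _ ⟨y, hy, rfl⟩
    refine Submodule.span_induction ?_ ?_ ?_ ?_ hy
    · rintro z ⟨dz, hdz, a, ha, rfl⟩
      refine Submodule.subset_span ⟨b * dz, ?_, a, ha, ?_⟩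
      · have : φ.1 (b * dz) = φ.1 b * φ.1 dz := φ.2.2 b dz
        rw [this, hdz, mul_zero]
      · push_cast
        rw [mul_assoc]
    · simp
    · intro z w _ _ hz hw
      show (b : A) * (z + w) ∈ _
      rw [mul_add]; exact Submodule.add_mem _ hz hw
    · intro c z _ hz
      show (b : A) * (c • z) ∈ _
      rw [mul_smul_comm]; exact Submodule.smul_mem _ _ hz
  have h1 : (b : A) * x ∈ (fun y : A => (b : A) * y) '' closure _ := ⟨x, hx, rfl⟩
  have h2 := image_closure_subset_closure_image (s := ((Submodule.span ℂ S : Submodule ℂ A) : Set A)) hL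
  exact closure_mono himg (h2 h1)

lemma normalizer_mul_star_mem (hDc : IsClosed (D : Set A))
    {ι : Type u} {l : Filter ι} {e : ι → A} (hbot : l.NeBot) (heD : ∀ i, e i ∈ D)
    (hconv : ∀ a : A, Tendsto (fun i => e i * a) l (𝓝 a) ∧ Tendsto (fun i => a * e i) l (𝓝 a))
    {n : A} (hn : ∀ d ∈ D, n * d * star n ∈ D ∧ star n * d * n ∈ D) : n * star n ∈ D := by
  haveI := hbot
  have h1 : Tendsto (fun i => n * (e i * star n)) l (𝓝 (n * star n)) :=
    ((hconv (star n)).1).const_mul n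
  exact hDc.mem_of_tendsto h1 (Eventually.of_forall fun i => by
    simpa [mul_assoc] using (hn (e i) (heD i)).1)

lemma char_mul (ρ : ↥(characterSpace ℂ D)) (x y : D) : ρ.1 (x * y) = ρ.1 x * ρ.1 y :=
  ρ.2.2 x y

end Helpers
section CStar

variable {A : Type u} [NonUnitalCStarAlgebra A] {D : NonUnitalStarSubalgebra ℂ A}

lemma char_mul' (ρ : ↥(characterSpace ℂ D)) (x y : D) : ρ.1 (x * y) = ρ.1 x * ρ.1 y :=
  ρ.2.2 x y

lemma char_eq_zero_of_forall (hDc : IsClosed (D : Set A))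
    (hab : ∀ a ∈ D, ∀ b ∈ D, a * b = b * a) (z : D) (hsa : star z = z)
    (hz : ∀ ρ : ↥(characterSpace ℂ D), ρ.1 z = 0) : z = 0 := by
  haveI : IsClosed ((D : Set A)) := hDc
  letI : NonUnitalCommCStarAlgebra ↥D :=
    { (inferInstance : NonUnitalCStarAlgebra ↥D) with
      mul_comm := fun x y => Subtype.ext (by push_cast; exact hab x x.2 y y.2) }
  have key : ∀ ψ : ↥(characterSpace ℂ (Unitization ℂ ↥D)),
      ψ.1 ((z : ↥D) : Unitization ℂ ↥D) = 0 := by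
    intro ψ
    by_cases h0 : ∀ x : ↥D, ψ.1 ((x : ↥D) : Unitization ℂ ↥D) = 0
    · exact h0 z
    · push_neg at h0
      obtain ⟨x₀, hx₀⟩ := h0
      let ρlin : ↥D →L[ℂ] ℂ :=
        { toFun := fun x => ψ.1 ((x : ↥D) : Unitization ℂ ↥D)
          map_add' := fun x y => by
            show ψ.1 ((↑(x + y) : Unitization ℂ ↥D)) = _
            rw [Unitization.inr_add]; exact map_add ψ.1 _ _
          map_smul' := fun c x => by
            show ψ.1 ((↑(c • x) : Unitization ℂ ↥D)) = _
            rw [Unitization.inr_smul]; simp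
          cont := ψ.1.continuous.comp Unitization.isometry_inr.continuous }
      have hmem : (ρlin : WeakDual ℂ ↥D) ∈ characterSpace ℂ ↥D := by
        refine ⟨fun hc => hx₀ ?_, fun x y => ?_⟩
        · have := congrArg (fun (f : WeakDual ℂ ↥D) => f x₀) hc
          exact this
        · show ψ.1 ((↑(x * y) : Unitization ℂ ↥D)) = _
          rw [Unitization.inr_mul]
          exact ψ.2.2 _ _
      exact hz ⟨ρlin, hmem⟩
  have hspec : spectrum ℂ ((z : ↥D) : Unitization ℂ ↥D) ⊆ {0} := by
    intro w hw
    obtain ⟨ψ, hψ⟩ := WeakDual.CharacterSpace.mem_spectrum_iff_exists.mp hw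
    rw [← hψ]
    simpa using key ψ
  have hsa' : IsSelfAdjoint ((z : ↥D) : Unitization ℂ ↥D) := by
    rw [IsSelfAdjoint, ← Unitization.inr_star, hsa]
  have hspec0 : spectrum ℂ ((z : ↥D) : Unitization ℂ ↥D) = {0} := by
    refine Set.Subset.antisymm hspec ?_
    obtain ⟨v, hv⟩ := spectrum.nonempty ((z : ↥D) : Unitization ℂ ↥D)
    intro w hw
    have h0 := hspec hv
    simp only [Set.mem_singleton_iff] at h0 hw ⊢
    rw [hw, ← h0]; exact hv
  have hrad := hsa'.spectralRadius_eq_nnnorm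
  have h0rad : spectralRadius ℂ ((z : ↥D) : Unitization ℂ ↥D) = 0 := by
    rw [spectralRadius, hspec0]; simp
  have hnorm : (‖((z : ↥D) : Unitization ℂ ↥D)‖₊ : ENNReal) = 0 := by
    rw [← hrad, h0rad]
  have hz0 : ((z : ↥D) : Unitization ℂ ↥D) = 0 := by simpa using hnorm
  have h5 : ((z : ↥D) : Unitization ℂ ↥D) = ((0 : ↥D) : Unitization ℂ ↥D) := by
    rw [hz0, Unitization.inr_zero]
  exact Unitization.inr_injective h5

lemma char_star (hDc : IsClosed (D : Set A)) (ρ : ↥(characterSpace ℂ D)) (x : D) :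
    ρ.1 (star x) = starRingEnd ℂ (ρ.1 x) := by
  haveI : IsClosed ((D : Set A)) := hDc
  have hfst : Continuous (fun u : Unitization ℂ ↥D => u.fst) :=
    (continuous_fst.comp Unitization.uniformEquivProd.continuous)
  have hsnd : Continuous (fun u : Unitization ℂ ↥D => u.snd) :=
    (continuous_snd.comp Unitization.uniformEquivProd.continuous)
  let Ψlin : Unitization ℂ ↥D →L[ℂ] ℂ :=
    { toFun := fun u => u.fst + ρ.1 u.snd
      map_add' := fun u v => by simp; ring
      map_smul' := fun c u => by simp; ring
      cont := hfst.add (ρ.1.continuous.comp hsnd) }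
  have hmem : (Ψlin : WeakDual ℂ (Unitization ℂ ↥D)) ∈ characterSpace ℂ (Unitization ℂ ↥D) := by
    refine ⟨fun hc => ?_, fun u v => ?_⟩
    · have h2 := congrArg (fun (f : WeakDual ℂ (Unitization ℂ ↥D)) => f 1) hc
      have h3 : Ψlin 1 = 0 := h2
      have h1 : (1 : Unitization ℂ ↥D).fst + ρ.1 (1 : Unitization ℂ ↥D).snd = 1 := by simp
      exact one_ne_zero (α := ℂ) (by rw [← h3]; exact h1.symm)
    · show (u * v).fst + ρ.1 (u * v).snd = (u.fst + ρ.1 u.snd) * (v.fst + ρ.1 v.snd)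
      rw [Unitization.fst_mul, Unitization.snd_mul]
      simp only [map_add, map_smul, char_mul' ρ, smul_eq_mul]
      ring
  let Ψ : ↥(characterSpace ℂ (Unitization ℂ ↥D)) := ⟨Ψlin, hmem⟩
  have hstar := map_star Ψ ((x : ↥D) : Unitization ℂ ↥D)
  have h1 : Ψ ((x : ↥D) : Unitization ℂ ↥D) = ρ.1 x := by
    show ((x : ↥D) : Unitization ℂ ↥D).fst + ρ.1 ((x : ↥D) : Unitization ℂ ↥D).snd = _
    simp
  have h2 : Ψ (star ((x : ↥D) : Unitization ℂ ↥D)) = ρ.1 (star x) := by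
    rw [← Unitization.inr_star]
    show ((star x : ↥D) : Unitization ℂ ↥D).fst + ρ.1 ((star x : ↥D) : Unitization ℂ ↥D).snd = _
    simp
  rw [h1, h2] at hstar
  exact hstar

end CStar

section Sqrt

variable {A : Type u} [NonUnitalCStarAlgebra A] {D : NonUnitalStarSubalgebra ℂ A}

lemma cfcn_mem (hDc : IsClosed (D : Set A)) {b : A} (hb : IsSelfAdjoint b) (hbD : b ∈ D)
    (f : ℝ → ℝ) : cfcₙ f b ∈ D := by
  have main : ∀ g : ContinuousMapZero (quasispectrum ℝ b) ℝ, cfcₙHom (R := ℝ) hb g ∈ D := by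
    intro g
    have hdense := ContinuousMapZero.adjoin_id_dense (quasispectrum ℝ b)
    have h₁ := (cfcₙHom_isClosedEmbedding (R := ℝ) hb).continuous.range_subset_closure_image_dense
      hdense ⟨g, rfl⟩
    have himg : (⇑(cfcₙHom (R := ℝ) hb)) ''
        ((NonUnitalStarAlgebra.adjoin ℝ {(ContinuousMapZero.id (quasispectrum ℝ b) :
          ContinuousMapZero (quasispectrum ℝ b) ℝ)} : NonUnitalStarSubalgebra ℝ _) : Set _)
        ⊆ (D : Set A) := by
      rintro _ ⟨p, hp, rfl⟩
      induction hp using NonUnitalStarAlgebra.adjoin_induction with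
      | mem x hx =>
        simp only [Set.mem_singleton_iff] at hx
        subst hx
        have hid : cfcₙHom (R := ℝ) hb (ContinuousMapZero.id (quasispectrum ℝ b)) = b := cfcₙHom_id hb
        rw [hid]
        exact hbD
      | add x y hx hy ihx ihy => rw [map_add]; exact add_mem ihx ihy
      | zero => rw [map_zero]; exact zero_mem D
      | mul x y hx hy ihx ihy => rw [map_mul]; exact mul_mem ihx ihy
      | smul r x hx ih =>
        rw [map_smul]
        have : (r : ℝ) • cfcₙHom (R := ℝ) hb x = ((r : ℂ)) • cfcₙHom (R := ℝ) hb x := by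
          rw [← smul_one_smul ℂ r (cfcₙHom (R := ℝ) hb x)]
          norm_num
        rw [this]
        exact SMulMemClass.smul_mem _ ih
      | star x hx ih => rw [map_star]; exact star_mem ih
    exact closure_minimal himg hDc (h₁)
  by_cases hf : ContinuousOn f (quasispectrum ℝ b) ∧ f 0 = 0
  · rw [cfcₙ_apply f b hf.1 hf.2 hb]
    exact main _
  · rcases not_and_or.mp hf with h | h
    · rw [cfcₙ_apply_of_not_continuousOn b h]; exact zero_mem D
    · rw [cfcₙ_apply_of_not_map_zero b h]; exact zero_mem D

lemma exists_sqrt_mem (hDc : IsClosed (D : Set A)) {n : A} (hn1 : star n * n ∈ D) :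
    ∃ z : A, z ∈ D ∧ IsSelfAdjoint z ∧ z * z = star n * n := by
  have hb : IsSelfAdjoint (star n * n) := IsSelfAdjoint.star_mul_self n
  have hσ : ∀ t ∈ quasispectrum ℝ (star n * n), 0 ≤ t := by
    rw [Unitization.quasispectrum_eq_spectrum_inr' ℝ ℂ]
    intro t ht
    have heq : ((star n * n : A) : Unitization ℂ A) =
        star ((n : A) : Unitization ℂ A) * ((n : A) : Unitization ℂ A) := by
      rw [← Unitization.inr_star, ← Unitization.inr_mul]
    rw [heq] at ht
    exact spectrum_star_mul_self_nonneg t ht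
  refine ⟨cfcₙ Real.sqrt (star n * n), cfcn_mem hDc hb hn1 _, ?_, ?_⟩
  · exact cfcₙ_predicate _ _
  · calc cfcₙ Real.sqrt (star n * n) * cfcₙ Real.sqrt (star n * n)
        = cfcₙ (fun t => Real.sqrt t * Real.sqrt t) (star n * n) := by
          rw [cfcₙ_mul _ _ _]
      _ = cfcₙ (fun t : ℝ => t) (star n * n) :=
          cfcₙ_congr (fun t ht => Real.mul_self_sqrt (hσ t ht))
      _ = star n * n := cfcₙ_id' ℝ _

lemma char_real_pos (hDc : IsClosed (D : Set A)) (ρ : ↥(characterSpace ℂ D)) {n : A}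
    (hn1 : star n * n ∈ D) :
    ∃ r : ℝ, 0 ≤ r ∧ ρ.1 ⟨star n * n, hn1⟩ = (r : ℂ) := by
  obtain ⟨z, hzD, hzsa, hzz⟩ := exists_sqrt_mem hDc hn1
  have h1 : (⟨star n * n, hn1⟩ : D) = ⟨z, hzD⟩ * ⟨z, hzD⟩ := Subtype.ext (by push_cast; exact hzz.symm)
  have h2 : ρ.1 ⟨star n * n, hn1⟩ = ρ.1 ⟨z, hzD⟩ * ρ.1 ⟨z, hzD⟩ := by
    rw [h1]; exact ρ.2.2 _ _
  have h3 : star (⟨z, hzD⟩ : D) = ⟨z, hzD⟩ := Subtype.ext (by push_cast; exact hzsa)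
  have h4 := char_star hDc ρ ⟨z, hzD⟩
  rw [h3] at h4
  obtain ⟨r, hr⟩ : ∃ r : ℝ, ρ.1 ⟨z, hzD⟩ = (r : ℂ) := by
    refine ⟨(ρ.1 ⟨z, hzD⟩).re, ?_⟩
    have := Complex.conj_eq_iff_re.mp h4.symm
    exact this.symm
  exact ⟨r * r, mul_self_nonneg r, by rw [h2, hr]; push_cast; ring⟩

end Sqrt
section Alpha

variable {A : Type u} [NonUnitalCStarAlgebra A] {D : NonUnitalStarSubalgebra ℂ A}
variable {n m : A}

lemma char_congr (ρ : ↥(characterSpace ℂ D)) {x y : A} (hx : x ∈ D) (hy : y ∈ D) (h : x = y) :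
    ρ.1 ⟨x, hx⟩ = ρ.1 ⟨y, hy⟩ := by subst h; rfl

/-- The middle element `m* (n c n*) m` as an element of `D`. -/
def midD (hn : IsNormalizer D n) (hm : IsNormalizer D m) (c : D) : D :=
  ⟨star m * (n * (c : A) * star n) * m, (hm _ (hn (c : A) c.2).1).2⟩

lemma midD_eval (hn : IsNormalizer D n) (hm : IsNormalizer D m)
    (hn1 : star n * n ∈ D) (hm1 : star m * m ∈ D) (hn2 : n * star n ∈ D) (hm2 : m * star m ∈ D)
    {en em : PartialHomeomorph ↥(characterSpace ℂ D) ↥(characterSpace ℂ D)}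
    (hen : IsAlphaFor D n en) (hem : IsAlphaFor D m em)
    {U : Set ↥(characterSpace ℂ D)}
    (hUsub : U ⊆ suppo D ⟨star n * n, hn1⟩ ∩ suppo D ⟨star m * m, hm1⟩)
    (hUeq : Set.EqOn (⇑en) (⇑em) U)
    {ψ : ↥(characterSpace ℂ D)} (hψ : ψ ∈ U) (c : D) :
    ψ.1 (midD hn hm c) =
      ψ.1 ⟨star n * n, hn1⟩ * ψ.1 ⟨star m * m, hm1⟩ * ψ.1 c := by
  obtain ⟨hensrc, -, henval⟩ := hen hn1 hn2
  obtain ⟨hemsrc, -, hemval⟩ := hem hm1 hm2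
  have hψn : ψ ∈ suppo D ⟨star n * n, hn1⟩ := (hUsub hψ).1
  have hψm : ψ ∈ suppo D ⟨star m * m, hm1⟩ := (hUsub hψ).2
  set nn : D := ⟨star n * n, hn1⟩ with hnn
  set mm : D := ⟨star m * m, hm1⟩ with hmm
  set G : D := ⟨n * (c : A) * star n, (hn (c : A) c.2).1⟩ with hG
  have h1 := hemval ψ (by rw [hemsrc]; exact hψm) G (midD hn hm c).2
  have heq : en ψ = em ψ := hUeq hψ
  have hGmem : star n * (G : A) * n ∈ D := by
    have hGeq : star n * (G : A) * n = (star n * n) * (c : A) * (star n * n) := by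
      show star n * (n * (c : A) * star n) * n = _
      simp only [mul_assoc]
    rw [hGeq]
    exact mul_mem (mul_mem hn1 c.2) hn1
  have h2 := henval ψ (by rw [hensrc]; exact hψn) G hGmem
  have h3 : ψ.1 ⟨star n * (G : A) * n, hGmem⟩ = ψ.1 nn * ψ.1 c * ψ.1 nn := by
    rw [char_congr ψ hGmem (mul_mem (mul_mem hn1 c.2) hn1) (by
      show star n * (n * (c : A) * star n) * n = _
      simp only [mul_assoc])]
    have : (⟨(star n * n) * (c : A) * (star n * n), mul_mem (mul_mem hn1 c.2) hn1⟩ : D) =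
        nn * c * nn := rfl
    rw [this, char_mul ψ (nn * c) nn, char_mul ψ nn c]
  rw [h3] at h2
  have hψn' : ψ.1 nn ≠ 0 := hψn
  have h4 : (en ψ).1 G = ψ.1 c * ψ.1 nn := by
    apply mul_left_cancel₀ hψn'
    rw [h2]; ring
  have h5 : ψ.1 (midD hn hm c) = ψ.1 mm * (em ψ).1 G := h1.symm
  rw [h5, ← heq, h4]
  ring

lemma Ystar_mul' (hn : IsNormalizer D n) (hm : IsNormalizer D m) (a b r s : D) :
    star ((a : A) * star n * m * (b : A)) * ((r : A) * star n * m * (s : A)) =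
      ((star b * midD hn hm (star a * r) * s : D) : A) := by
  simp [midD, star_mul, star_star, mul_assoc]

lemma sandwich_commutes (hDc : IsClosed (D : Set A))
    (hab : ∀ a ∈ D, ∀ b ∈ D, a * b = b * a)
    (hn : IsNormalizer D n) (hm : IsNormalizer D m)
    (hn1 : star n * n ∈ D) (hm1 : star m * m ∈ D) (hn2 : n * star n ∈ D) (hm2 : m * star m ∈ D)
    {en em : PartialHomeomorph ↥(characterSpace ℂ D) ↥(characterSpace ℂ D)}
    (hen : IsAlphaFor D n en) (hem : IsAlphaFor D m em)
    {U : Set ↥(characterSpace ℂ D)}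
    (hUsub : U ⊆ suppo D ⟨star n * n, hn1⟩ ∩ suppo D ⟨star m * m, hm1⟩)
    (hUeq : Set.EqOn (⇑en) (⇑em) U)
    (d : D) (hd : suppo D d ⊆ U) :
    ((d : A) * star n * m * (d : A)) ∈ commutantSet D := by
  intro c hc
  set cD : D := ⟨c, hc⟩ with hcD
  set p : D := d with hp
  set q : D := d * cD with hq
  set W : D → D → D → D → D := fun a b r s => star b * midD hn hm (star a * r) * s with hW
  have Ystar_mul : ∀ a b r s : D,
      star ((a : A) * star n * m * (b : A)) * ((r : A) * star n * m * (s : A)) =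
        ((W a b r s : D) : A) := fun a b r s => Ystar_mul' hn hm a b r s
  set x : A := ((d : A) * star n * m * (d : A)) * c - c * ((d : A) * star n * m * (d : A)) with hx
  have hYpq : ((d : A) * star n * m * (d : A)) * c = (p : A) * star n * m * (q : A) := by
    simp only [hp, hq, MulMemClass.coe_mul, mul_assoc]
    rfl
  have hYqp : c * ((d : A) * star n * m * (d : A)) = (q : A) * star n * m * (p : A) := by
    have hqc : (q : A) = c * (d : A) := by
      show ((d * cD : D) : A) = c * (d : A)
      rw [MulMemClass.coe_mul]
      exact (hab c hc (d : A) d.2).symm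
    rw [hqc]
    simp only [hp, mul_assoc]
  set S : D := W p q p q - W p q q p - W q p p q + W q p q p with hS
  have hx2 : star x * x = (S : A) := by
    rw [hx, hYpq, hYqp]
    rw [star_sub, sub_mul, mul_sub, mul_sub]
    rw [Ystar_mul p q p q, Ystar_mul p q q p, Ystar_mul q p p q, Ystar_mul q p q p]
    push_cast [hS]
    abel
  have hchar : ∀ ρ : ↥(characterSpace ℂ D), ρ.1 S = 0 := by
    intro ρ
    have hWev : ∀ a b r s : D, ρ.1 (W a b r s) =
        ρ.1 (star b) * (ρ.1 (midD hn hm (star a * r))) * ρ.1 s := by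
      intro a b r s
      rw [hW]
      show ρ.1 (star b * midD hn hm (star a * r) * s) = _
      rw [char_mul ρ (star b * midD hn hm (star a * r)) s,
        char_mul ρ (star b) (midD hn hm (star a * r))]
    have hSev : ρ.1 S = ρ.1 (W p q p q) - ρ.1 (W p q q p) - ρ.1 (W q p p q) + ρ.1 (W q p q p) := by
      rw [hS]; simp [map_add, map_sub]
    by_cases hρd : ρ.1 d = 0
    · have hqz : ρ.1 q = 0 := by rw [hq, char_mul ρ d cD, hρd, zero_mul]
      have hpz : ρ.1 p = 0 := hρd
      rw [hSev, hWev, hWev, hWev, hWev, hpz, hqz]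
      ring
    · have hρU : ρ ∈ U := hd hρd
      have hmid : ∀ c' : D, ρ.1 (midD hn hm c') =
          ρ.1 ⟨star n * n, hn1⟩ * ρ.1 ⟨star m * m, hm1⟩ * ρ.1 c' :=
        fun c' => midD_eval hn hm hn1 hm1 hn2 hm2 hen hem hUsub hUeq hρU c'
      rw [hSev, hWev, hWev, hWev, hWev, hmid, hmid, hmid, hmid,
        char_mul ρ (star p) q, char_mul ρ (star p) p, char_mul ρ (star q) q,
        char_mul ρ (star q) p]
      ring
  have hSsa : star S = S := Subtype.ext (by
    rw [StarMemClass.coe_star, ← hx2, star_mul, star_star])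
  have hS0 : S = 0 := char_eq_zero_of_forall hDc hab S hSsa hchar
  have hxx : star x * x = 0 := by rw [hx2, hS0]; simp
  have hx0 : x = 0 := (CStarRing.star_mul_self_eq_zero_iff x).mp hxx
  exact sub_eq_zero.mp hx0

end Alpha
section Units

variable {A : Type u} [NonUnitalCStarAlgebra A] {D : NonUnitalStarSubalgebra ℂ A}

lemma exists_good_unit (hwc : IsWeaklyCartan D) (φ : ↥(characterSpace ℂ D))
    (d : D) (hd1 : φ.1 d = 1) :
    ∃ d₃ : D, φ.1 d₃ = 1 ∧ ∀ a ∈ commutantSet D,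
      (d₃ : A) * a - a ∈ Jphi D φ ∧ a * (d₃ : A) - a ∈ Jphi D φ := by
  obtain ⟨du, Uu, hUuo, hφUu, hUu⟩ := hwc.2.2.2 φ
  have hdu : IsUnitMod D (du : A) (Jphi D φ) := hUu φ hφUu
  refine ⟨d + du - d * du, ?_, ?_⟩
  · rw [map_sub, map_add, char_mul φ d du, hd1, one_mul]
    ring
  · intro a ha
    have h1 : (du : A) * a - a ∈ Jphi D φ := (hdu a ha).2
    have h2 : ((d + du - d * du : D) : A) * a - a =
        -((d : A) * ((du : A) * a - a)) + ((du : A) * a - a) := by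
      push_cast
      noncomm_ring
    have hmem : ((d + du - d * du : D) : A) * a - a ∈ Jphi D φ := by
      rw [h2]
      exact Jphi_add_mem (Jphi_neg_mem (Jphi_mul_left d h1)) h1
    refine ⟨hmem, ?_⟩
    have hcomm : a * ((d + du - d * du : D) : A) = ((d + du - d * du : D) : A) * a :=
      ha _ (d + du - d * du).2
    rw [hcomm]
    exact hmem

lemma mul_sub_char_smul_mem (hwc : IsWeaklyCartan D) (φ : ↥(characterSpace ℂ D))
    (d : D) (hd1 : φ.1 d = 1) (b : D) {x : A} (hx : x ∈ commutantSet D) :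
    (b : A) * x - (φ.1 b) • x ∈ Jphi D φ := by
  obtain ⟨d₃, hd₃1, hd₃⟩ := exists_good_unit hwc φ d hd1
  have h1 : (b : A) * x - (φ.1 b) • x =
      ((b - φ.1 b • d₃ : D) : A) * x + (φ.1 b) • ((d₃ : A) * x - x) := by
    push_cast
    simp only [sub_mul, smul_mul_assoc, smul_sub]
    abel
  rw [h1]
  refine Jphi_add_mem (gen_mem_Jphi _ ?_ hx) (Jphi_smul_mem _ (hd₃ x hx).1)
  rw [map_sub, map_smul, hd₃1, smul_eq_mul, mul_one, sub_self]

lemma smul_sub_unit_mem (hwc : IsWeaklyCartan D) (φ : ↥(characterSpace ℂ D))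
    (d : D) (hd1 : φ.1 d = 1)
    (hab : ∀ a ∈ D, ∀ b ∈ D, a * b = b * a)
    (K : ℂ) (B : D) (hKB : K * φ.1 B = 1)
    {e : A} (he : e ∈ commutantSet D) (heU : IsUnitMod D e (Jphi D φ)) :
    K • (B : A) - e ∈ Jphi D φ := by
  obtain ⟨d₃, hd₃1, hd₃⟩ := exists_good_unit hwc φ d hd1
  have hBcomm : (B : A) ∈ commutantSet D := fun dd hdd => hab (B : A) B.2 dd hdd
  have h1 : (B : A) * e - (B : A) ∈ Jphi D φ := (heU (B : A) hBcomm).1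
  have h2 : ((K • B - d₃ : D) : A) * e ∈ Jphi D φ := by
    refine gen_mem_Jphi _ ?_ he
    rw [map_sub, map_smul, hd₃1, smul_eq_mul, hKB, sub_self]
  have h3 : (d₃ : A) * e - e ∈ Jphi D φ := (hd₃ e he).1
  have hsplit : K • (B : A) - e =
      (-(K • ((B : A) * e - (B : A))) + ((K • B - d₃ : D) : A) * e) + ((d₃ : A) * e - e) := by
    push_cast
    simp only [sub_mul, smul_mul_assoc, smul_sub]
    abel
  rw [hsplit]
  exact Jphi_add_mem (Jphi_add_mem (Jphi_neg_mem (Jphi_smul_mem _ h1)) h2) h3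

end Units
theorem stmt14 {A : Type u} [NonUnitalCStarAlgebra A] [TopologicalSpace.SeparableSpace A]
    (D : NonUnitalStarSubalgebra ℂ A) (hDc : IsClosed (D : Set A))
    (hwc : IsWeaklyCartan D)
    (n m : A) (hn : IsNormalizer D n) (hm : IsNormalizer D m)
    (hn1 : star n * n ∈ D) (hm1 : star m * m ∈ D)
    (en em : PartialHomeomorph ↥(characterSpace ℂ D) ↥(characterSpace ℂ D))
    (hen : IsAlphaFor D n en) (hem : IsAlphaFor D m em)
    (φ : ↥(characterSpace ℂ D))
    (hφ : φ ∈ suppo D ⟨star n * n, hn1⟩ ∩ suppo D ⟨star m * m, hm1⟩)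
    (U : Set ↥(characterSpace ℂ D)) (hUo : IsOpen U) (hφU : φ ∈ U)
    (hUsub : U ⊆ suppo D ⟨star n * n, hn1⟩ ∩ suppo D ⟨star m * m, hm1⟩)
    (hUeq : Set.EqOn (⇑en) (⇑em) U)
    (d : D) (hd : suppo D d ⊆ U) (hd1 : φ.1 d = 1) :
    ∃ w : A,
      w = (φ.1 ⟨star n * n, hn1⟩ ^ (-(1/2) : ℂ) * φ.1 ⟨star m * m, hm1⟩ ^ (-(1/2) : ℂ)) •
            ((d : A) * star n * m * (d : A)) ∧
      -- w lies in the relative commutant D'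
      w ∈ commutantSet D ∧
      -- π_φ(w) is a unitary in the unital C*-algebra D'/J_φ
      (∀ e ∈ commutantSet D, IsUnitMod D e (Jphi D φ) →
        star w * w - e ∈ Jphi D φ ∧ w * star w - e ∈ Jphi D φ) ∧
      -- π_φ(w) does not depend on the choices of U and d
      (∀ (U' : Set ↥(characterSpace ℂ D)) (d' : D), IsOpen U' → φ ∈ U' →
        U' ⊆ suppo D ⟨star n * n, hn1⟩ ∩ suppo D ⟨star m * m, hm1⟩ →
        Set.EqOn (⇑en) (⇑em) U' → suppo D d' ⊆ U' → φ.1 d' = 1 →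
        w - (φ.1 ⟨star n * n, hn1⟩ ^ (-(1/2) : ℂ) * φ.1 ⟨star m * m, hm1⟩ ^ (-(1/2) : ℂ)) •
              ((d' : A) * star n * m * (d' : A)) ∈ Jphi D φ) := by
  classical
  have hab := hwc.1
  obtain ⟨ι, l, eapp, hbot, heD, hconv⟩ := hwc.2.1
  have hn2 : n * star n ∈ D := normalizer_mul_star_mem hDc hbot heD hconv hn
  have hm2 : m * star m ∈ D := normalizer_mul_star_mem hDc hbot heD hconv hm
  obtain ⟨ra, hra0, hraeq⟩ := char_real_pos hDc φ hn1
  obtain ⟨rb, hrb0, hrbeq⟩ := char_real_pos hDc φ hm1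
  have hφn : φ.1 (⟨star n * n, hn1⟩ : D) ≠ 0 := hφ.1
  have hφm : φ.1 (⟨star m * m, hm1⟩ : D) ≠ 0 := hφ.2
  have hra : 0 < ra := lt_of_le_of_ne hra0 (by
    intro h
    exact hφn (by rw [hraeq, ← h, Complex.ofReal_zero]))
  have hrb : 0 < rb := lt_of_le_of_ne hrb0 (by
    intro h
    exact hφm (by rw [hrbeq, ← h, Complex.ofReal_zero]))
  set g : ℝ := ra ^ (-(1/2) : ℝ) * rb ^ (-(1/2) : ℝ) with hg
  set γ : ℂ := φ.1 (⟨star n * n, hn1⟩ : D) ^ (-(1/2) : ℂ) *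
      φ.1 (⟨star m * m, hm1⟩ : D) ^ (-(1/2) : ℂ) with hγ
  set x : A := (d : A) * star n * m * (d : A) with hxdef
  have hγg : γ = (g : ℂ) := by
    rw [hγ, hraeq, hrbeq, hg, Complex.ofReal_mul,
      Complex.ofReal_cpow hra0, Complex.ofReal_cpow hrb0]
    norm_num
  have hrpow : ∀ r : ℝ, 0 < r → r ^ (-(1/2) : ℝ) * r ^ (-(1/2) : ℝ) * r = 1 := by
    intro r hr
    rw [← Real.rpow_add hr]
    norm_num
    rw [Real.rpow_neg_one]
    exact inv_mul_cancel₀ hr.ne'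
  have hggrr : g * g * (ra * rb) = 1 := by
    have hcalc : g * g * (ra * rb) =
        (ra ^ (-(1/2) : ℝ) * ra ^ (-(1/2) : ℝ) * ra) *
        (rb ^ (-(1/2) : ℝ) * rb ^ (-(1/2) : ℝ) * rb) := by rw [hg]; ring
    rw [hcalc, hrpow ra hra, hrpow rb hrb, mul_one]
  have hK1 : ((g * g : ℝ) : ℂ) *
      (φ.1 (⟨star n * n, hn1⟩ : D) * φ.1 (⟨star m * m, hm1⟩ : D)) = 1 := by
    rw [hraeq, hrbeq]
    rw [← Complex.ofReal_mul, ← Complex.ofReal_mul, ← Complex.ofReal_one]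
    exact congrArg Complex.ofReal hggrr
  have hφds : φ.1 (star d) = 1 := by
    rw [char_star hDc φ d, hd1, map_one]
  have hmidφ : ∀ c' : D, φ.1 (midD hn hm c') =
      φ.1 (⟨star n * n, hn1⟩ : D) * φ.1 (⟨star m * m, hm1⟩ : D) * φ.1 c' :=
    fun c' => midD_eval hn hm hn1 hm1 hn2 hm2 hen hem hUsub hUeq hφU c'
  have hmidφ' : ∀ c' : D, φ.1 (midD hm hn c') =
      φ.1 (⟨star m * m, hm1⟩ : D) * φ.1 (⟨star n * n, hn1⟩ : D) * φ.1 c' :=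
    fun c' => midD_eval hm hn hm1 hn1 hm2 hn2 hem hen
      (fun ψ h => ⟨(hUsub h).2, (hUsub h).1⟩) (fun ψ h => (hUeq h).symm) hφU c'
  set B : D := star d * midD hn hm (star d * d) * d with hBdef
  set B₂ : D := d * midD hm hn (d * star d) * star d with hB2def
  have hB : star x * x = (B : A) := by
    rw [hxdef]
    exact Ystar_mul' hn hm d d d d
  have hB2 : x * star x = (B₂ : A) := by
    have hsx : star x = ((star d : D) : A) * star m * n * ((star d : D) : A) := by
      rw [hxdef]
      simp [star_mul, star_star, mul_assoc]
    calc x * star x = star (star x) * star x := by rw [star_star]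
      _ = star (((star d : D) : A) * star m * n * ((star d : D) : A)) *
          (((star d : D) : A) * star m * n * ((star d : D) : A)) := by rw [hsx]
      _ = ((star (star d) * midD hm hn (star (star d) * star d) * star d : D) : A) :=
          Ystar_mul' hm hn (star d) (star d) (star d) (star d)
      _ = (B₂ : A) := by rw [star_star d, hB2def]
  have hφB : φ.1 B = φ.1 (⟨star n * n, hn1⟩ : D) * φ.1 (⟨star m * m, hm1⟩ : D) := by
    rw [hBdef, char_mul φ (star d * midD hn hm (star d * d)) d,
      char_mul φ (star d) (midD hn hm (star d * d)), hmidφ,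
      char_mul φ (star d) d, hφds, hd1]
    ring
  have hφB2 : φ.1 B₂ = φ.1 (⟨star n * n, hn1⟩ : D) * φ.1 (⟨star m * m, hm1⟩ : D) := by
    rw [hB2def, char_mul φ (d * midD hm hn (d * star d)) (star d),
      char_mul φ d (midD hm hn (d * star d)), hmidφ',
      char_mul φ d (star d), hφds, hd1]
    ring
  have hxcomm : x ∈ commutantSet D :=
    sandwich_commutes hDc hab hn hm hn1 hm1 hn2 hm2 hen hem hUsub hUeq d hd
  refine ⟨γ • x, rfl, ?_, ?_, ?_⟩
  · -- commutant
    intro dd hdd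
    rw [smul_mul_assoc, hxcomm dd hdd, mul_smul_comm]
  · -- unitary
    intro e he heU
    have hsww : star (γ • x) * (γ • x) = ((g * g : ℝ) : ℂ) • (B : A) := by
      rw [star_smul, smul_mul_assoc, mul_smul_comm, smul_smul, hB, hγg]
      rw [RCLike.star_def, Complex.conj_ofReal, ← Complex.ofReal_mul]
    have hwws : (γ • x) * star (γ • x) = ((g * g : ℝ) : ℂ) • (B₂ : A) := by
      rw [star_smul, smul_mul_assoc, mul_smul_comm, smul_smul, hB2, hγg]
      rw [RCLike.star_def, Complex.conj_ofReal, ← Complex.ofReal_mul, mul_comm g g]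
    constructor
    · rw [hsww]
      refine smul_sub_unit_mem hwc φ d hd1 hab _ B ?_ he heU
      rw [hφB]; exact hK1
    · rw [hwws]
      refine smul_sub_unit_mem hwc φ d hd1 hab _ B₂ ?_ he heU
      rw [hφB2]; exact hK1
  · -- independence
    intro U' d' hU'o hφU' hU'sub hU'eq hd'sub hd'1
    set X' : A := (d' : A) * star n * m * (d' : A) with hX'def
    have hx'comm : X' ∈ commutantSet D :=
      sandwich_commutes hDc hab hn hm hn1 hm1 hn2 hm2 hen hem hU'sub hU'eq d' hd'sub
    have hdd' : (d : A) * (d' : A) = (d' : A) * (d : A) := hab _ d.2 _ d'.2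
    have hXd' : x * (d' : A) = (d' : A) * x := hxcomm _ d'.2
    have hX'd : X' * (d : A) = (d : A) * X' := hx'comm _ d.2
    have c1 : (d : A) * (d' : A) * star n * m * ((d : A) * (d' : A)) =
        (d' : A) * (d' : A) * x := by
      calc (d : A) * (d' : A) * star n * m * ((d : A) * (d' : A))
          = (d' : A) * (x * (d' : A)) := by
            nth_rewrite 1 [hdd']
            rw [hxdef]
            simp only [mul_assoc]
        _ = (d' : A) * ((d' : A) * x) := by rw [hXd']
        _ = (d' : A) * (d' : A) * x := by rw [mul_assoc]
    have c2 : (d : A) * (d' : A) * star n * m * ((d : A) * (d' : A)) =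
        (d : A) * (d : A) * X' := by
      calc (d : A) * (d' : A) * star n * m * ((d : A) * (d' : A))
          = (d : A) * (X' * (d : A)) := by
            nth_rewrite 2 [hdd']
            rw [hX'def]
            simp only [mul_assoc]
        _ = (d : A) * ((d : A) * X') := by rw [hX'd]
        _ = (d : A) * (d : A) * X' := by rw [mul_assoc]
    have hE : ((d' * d' : D) : A) * x = ((d * d : D) : A) * X' := by
      push_cast
      rw [← c1, ← c2]
    have m1 : ((d' * d' : D) : A) * x - x ∈ Jphi D φ := by
      have h := mul_sub_char_smul_mem hwc φ d hd1 (d' * d') hxcomm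
      rwa [char_mul φ d' d', hd'1, one_mul, one_smul] at h
    have m2 : ((d * d : D) : A) * X' - X' ∈ Jphi D φ := by
      have h := mul_sub_char_smul_mem hwc φ d hd1 (d * d) hx'comm
      rwa [char_mul φ d d, hd1, one_mul, one_smul] at h
    have m3 : x - X' ∈ Jphi D φ := by
      have hsplit : x - X' = (((d * d : D) : A) * X' - X') - (((d' * d' : D) : A) * x - x) := by
        rw [hE]; abel
      rw [hsplit]
      exact Jphi_sub_mem m2 m1
    have : γ • x - γ • X' ∈ Jphi D φ := by
      rw [← smul_sub]
      exact Jphi_smul_mem γ m3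
    exact this
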